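/- Let N be a natural number with at least 13 distinct prime divisors. Then φ(N) > 2·√N·(log N + 1)·2^{ω(N)}, where φ is Euler's totient function and ω(N) is the number of distinct prime divisors of N. -/

import Mathlib

open Finset

namespace AuxStmt0

/-- Piecewise rational lower bound for `(p-1) p^{1/4} / (2p)`. -/
noncomputable def rr (p : ℕ) : ℝ :=
  if p = 2 then 297/1000 else if p = 3 then 438/1000 else if p = 5 then 598/1000
  else if p = 7 then 697/1000 else if p = 11 then 827/1000 else if p = 13 then 876/1000
  else if p = 17 then 955/1000 else if p = 19 then 988/1000 else 1

lemma rr_pos (p : ℕ) : 0 < rr p := by unfold rr; split_ifs <;> norm_num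

lemma rr_le_one (p : ℕ) : rr p ≤ 1 := by unfold rr; split_ifs <;> norm_num

lemma rr_eq_one {p : ℕ} (hp : p ∉ ({2,3,5,7,11,13,17,19} : Finset ℕ)) : rr p = 1 := by
  simp only [Finset.mem_insert, Finset.mem_singleton] at hp
  push_neg at hp
  obtain ⟨h1,h2,h3,h4,h5,h6,h7,h8⟩ := hp
  unfold rr
  split_ifs <;> simp_all

lemma quad_root_le {c : ℝ} (q : ℝ) (hc : 0 ≤ c) (h : c^4 ≤ q) :
    c ≤ Real.sqrt (Real.sqrt q) := by
  have h1 : Real.sqrt (c^4) = c^2 := by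
    rw [show c^4 = (c^2)^2 by ring, Real.sqrt_sq (by positivity)]
  have h2 : Real.sqrt (Real.sqrt (c^4)) = c := by rw [h1, Real.sqrt_sq hc]
  rw [← h2]
  exact Real.sqrt_le_sqrt (Real.sqrt_le_sqrt h)

lemma quad_pow {x : ℝ} (hx : 0 ≤ x) : (Real.sqrt (Real.sqrt x))^4 = x := by
  rw [show (Real.sqrt (Real.sqrt x))^4 = ((Real.sqrt (Real.sqrt x))^2)^2 by ring,
    Real.sq_sqrt (Real.sqrt_nonneg x), Real.sq_sqrt hx]

lemma rr_le_g {p : ℕ} (hp : p.Prime) :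
    rr p ≤ ((p:ℝ) - 1) * Real.sqrt (Real.sqrt p) / (2*p) := by
  rcases eq_or_ne p 2 with rfl | hne2
  · have hu := quad_root_le (c := 1.188) 2 (by norm_num) (by norm_num)
    unfold rr
    norm_num
    nlinarith [hu]
  rcases eq_or_ne p 3 with rfl | hne3
  · have hu := quad_root_le (c := 1.314) 3 (by norm_num) (by norm_num)
    unfold rr
    norm_num
    nlinarith [hu]
  rcases eq_or_ne p 5 with rfl | hne5
  · have hu := quad_root_le (c := 1.495) 5 (by norm_num) (by norm_num)
    unfold rr
    norm_num
    nlinarith [hu]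
  rcases eq_or_ne p 7 with rfl | hne7
  · have hu := quad_root_le (c := 1.6264) 7 (by norm_num) (by norm_num)
    unfold rr
    norm_num
    nlinarith [hu]
  rcases eq_or_ne p 11 with rfl | hne11
  · have hu := quad_root_le (c := 1.8194) 11 (by norm_num) (by norm_num)
    unfold rr
    norm_num
    nlinarith [hu]
  rcases eq_or_ne p 13 with rfl | hne13
  · have hu := quad_root_le (c := 1.898) 13 (by norm_num) (by norm_num)
    unfold rr
    norm_num
    nlinarith [hu]
  rcases eq_or_ne p 17 with rfl | hne17
  · have hu := quad_root_le (c := 2.0294) 17 (by norm_num) (by norm_num)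
    unfold rr
    norm_num
    nlinarith [hu]
  rcases eq_or_ne p 19 with rfl | hne19
  · have hu := quad_root_le (c := 2.0858) 19 (by norm_num) (by norm_num)
    unfold rr
    norm_num
    nlinarith [hu]
  -- remaining: p prime, p ≥ 23
  have h23 : 23 ≤ p := by
    by_contra h'
    push_neg at h'
    have h2le := hp.two_le
    interval_cases p <;> first | omega | exact absurd hp (by decide)
  have hcast : (23:ℝ) ≤ (p:ℝ) := by exact_mod_cast h23
  have hppos : (0:ℝ) < (p:ℝ) := by linarith
  have hu4 : (Real.sqrt (Real.sqrt (p:ℝ)))^4 = (p:ℝ) := quad_pow (by positivity)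
  have hub : (218/100:ℝ) ≤ Real.sqrt (Real.sqrt (p:ℝ)) :=
    quad_root_le _ (by norm_num) (by nlinarith)
  have h1 : rr p = 1 := rr_eq_one (by
    simp only [Finset.mem_insert, Finset.mem_singleton]
    push_neg
    omega)
  rw [h1, le_div_iff₀ (by positivity)]
  set u := Real.sqrt (Real.sqrt (p:ℝ)) with hu
  rw [← hu4]
  nlinarith [hub, pow_le_pow_left₀ (by norm_num : (0:ℝ) ≤ 218/100) hub 3,
    pow_le_pow_left₀ (by norm_num : (0:ℝ) ≤ 218/100) hub 4]

lemma prod_rr_ge (S : Finset ℕ) : (37/1000 : ℝ) ≤ ∏ p ∈ S, rr p := by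
  classical
  set LT : Finset ℕ := {2,3,5,7,11,13,17,19} with hLT
  have h1 : ∏ p ∈ S, rr p = ∏ p ∈ S.filter (· ∈ LT), rr p := by
    rw [← Finset.prod_filter_mul_prod_filter_not S (· ∈ LT)]
    have h0 : ∏ p ∈ S.filter (fun p => ¬ p ∈ LT), rr p = 1 :=
      Finset.prod_eq_one (fun p hp => rr_eq_one (Finset.mem_filter.mp hp).2)
    rw [h0, mul_one]
  rw [h1]
  have hsub : S.filter (· ∈ LT) ⊆ LT := fun p hp => (Finset.mem_filter.mp hp).2
  have h2 : ∏ p ∈ LT, rr p ≤ ∏ p ∈ S.filter (· ∈ LT), rr p := by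
    rw [← Finset.prod_sdiff hsub]
    have hle1 : ∏ p ∈ LT \ S.filter (· ∈ LT), rr p ≤ 1 :=
      Finset.prod_le_one (fun p _ => (rr_pos p).le) (fun p _ => rr_le_one p)
    have hge0 : (0:ℝ) ≤ ∏ p ∈ S.filter (· ∈ LT), rr p :=
      Finset.prod_nonneg (fun p _ => (rr_pos p).le)
    nlinarith
  refine le_trans ?_ h2
  have : ∏ p ∈ LT, rr p =
      rr 2 * (rr 3 * (rr 5 * (rr 7 * (rr 11 * (rr 13 * (rr 17 * rr 19)))))) := by
    rw [hLT]
    rw [Finset.prod_insert (by decide), Finset.prod_insert (by decide),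
      Finset.prod_insert (by decide), Finset.prod_insert (by decide),
      Finset.prod_insert (by decide), Finset.prod_insert (by decide),
      Finset.prod_insert (by decide), Finset.prod_singleton]
  rw [this]
  norm_num [rr]

/-- product of the first m odd numbers starting from 3 -/
def op : ℕ → ℕ
  | 0 => 1
  | (m+1) => op m * (2*m+3)

lemma odd_prod_ge : ∀ (m : ℕ) (S : Finset ℕ), S.card = m →
    (∀ x ∈ S, x % 2 = 1 ∧ 3 ≤ x) → op m ≤ ∏ x ∈ S, x := by
  intro m
  induction m with
  | zero =>
    intro S hS _
    rw [Finset.card_eq_zero.mp hS]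
    simp [op]
  | succ m ih =>
    intro S hS hodd
    have hne : S.Nonempty := Finset.card_pos.mp (by omega)
    set M := S.max' hne with hM
    have hMS : M ∈ S := S.max'_mem hne
    have hmaps : ∀ x ∈ S, x / 2 ∈ Finset.Icc 1 (M / 2) := by
      intro x hx
      have h3 := (hodd x hx).2
      have hle : x ≤ M := S.le_max' x hx
      rw [Finset.mem_Icc]
      omega
    have hinj : Set.InjOn (fun x => x / 2) S := by
      intro x hx y hy hxy
      have hx1 := (hodd x hx).1
      have hy1 := (hodd y hy).1
      simp only at hxy
      omega
    have hcard := Finset.card_le_card_of_injOn _ hmaps hinj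
    rw [Nat.card_Icc] at hcard
    have hModd := (hodd M hMS).1
    have hMge : 2*m + 3 ≤ M := by omega
    have hE : M * ∏ x ∈ S.erase M, x = ∏ x ∈ S, x :=
      Finset.mul_prod_erase S (fun x => x) hMS
    have hcard' : (S.erase M).card = m := by
      rw [Finset.card_erase_of_mem hMS, hS]
      omega
    have hIH := ih (S.erase M) hcard' (fun x hx => hodd x (Finset.mem_of_mem_erase hx))
    calc op (m+1) = op m * (2*m+3) := rfl
      _ ≤ (∏ x ∈ S.erase M, x) * M := Nat.mul_le_mul hIH hMge
      _ = ∏ x ∈ S, x := by rw [mul_comm]; exact hE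

lemma prod_primes_ge (S : Finset ℕ) (hp : ∀ p ∈ S, p.Prime) (hc : 13 ≤ S.card) :
    15811707161250 ≤ ∏ p ∈ S, p := by
  classical
  by_cases h2 : 2 ∈ S
  · obtain ⟨T, hTsub, hTcard⟩ := Finset.exists_subset_card_eq (s := S.erase 2) (n := 12)
      (by rw [Finset.card_erase_of_mem h2]; omega)
    have hTodd : ∀ x ∈ T, x % 2 = 1 ∧ 3 ≤ x := by
      intro x hx
      have hxe := hTsub hx
      have hxp := hp x (Finset.mem_of_mem_erase hxe)
      have hx2 : x ≠ 2 := Finset.ne_of_mem_erase hxe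
      have h2le := hxp.two_le
      have hodd := Nat.odd_iff.mp (hxp.odd_of_ne_two hx2)
      omega
    have hT := odd_prod_ge 12 T hTcard hTodd
    have hTS : ∏ x ∈ T, x ≤ ∏ x ∈ S.erase 2, x :=
      Finset.prod_le_prod_of_subset_of_one_le' hTsub
        (fun i hi _ => (hp i (Finset.mem_of_mem_erase hi)).one_lt.le)
    have hE : 2 * ∏ x ∈ S.erase 2, x = ∏ x ∈ S, x :=
      Finset.mul_prod_erase S (fun x => x) h2
    have hop : op 12 = 7905853580625 := by norm_num [op]
    omega
  · obtain ⟨T, hTsub, hTcard⟩ := Finset.exists_subset_card_eq (s := S) (n := 13) hc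
    have hTodd : ∀ x ∈ T, x % 2 = 1 ∧ 3 ≤ x := by
      intro x hx
      have hxS := hTsub hx
      have hxp := hp x hxS
      have hx2 : x ≠ 2 := fun he => h2 (he ▸ hxS)
      have h2le := hxp.two_le
      have hodd := Nat.odd_iff.mp (hxp.odd_of_ne_two hx2)
      omega
    have hT := odd_prod_ge 13 T hTcard hTodd
    have hTS : ∏ x ∈ T, x ≤ ∏ x ∈ S, x :=
      Finset.prod_le_prod_of_subset_of_one_le' hTsub
        (fun i hi _ => (hp i hi).one_lt.le)
    have hop : op 13 = 213458046676875 := by norm_num [op]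
    omega

end AuxStmt0

open AuxStmt0 in
/-- Let `N` be a natural number with at least 13 distinct prime divisors. Then
`φ(N) > 2·√N·(log N + 1)·2^{ω(N)}`. -/
theorem stmt0 (N : ℕ) (h : 13 ≤ N.primeFactors.card) :
    2 * Real.sqrt N * (Real.log N + 1) * 2 ^ N.primeFactors.card < (N.totient : ℝ) := by
  classical
  set S := N.primeFactors with hSdef
  have hprime : ∀ p ∈ S, p.Prime := fun p hp => Nat.prime_of_mem_primeFactors hp
  have hN0 : N ≠ 0 := by
    intro h0
    rw [hSdef, h0] at h
    simp at h
  have hNpos : 0 < N := Nat.pos_of_ne_zero hN0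
  have hrad : (∏ p ∈ S, p) ≤ N := Nat.le_of_dvd hNpos (Nat.prod_primeFactors_dvd N)
  have hNbig : (15811707161250 : ℕ) ≤ N := le_trans (prod_primes_ge S hprime h) hrad
  set t : ℝ := Real.sqrt (Real.sqrt N) with htdef
  have hNr : (0:ℝ) ≤ (N:ℝ) := by positivity
  have ht4 : t^4 = (N:ℝ) := quad_pow hNr
  have htge : (1990:ℝ) ≤ t := by
    apply quad_root_le _ (by norm_num)
    have hc : ((15811707161250:ℕ):ℝ) ≤ (N:ℝ) := by exact_mod_cast hNbig
    norm_num at hc ⊢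
    linarith
  have ht0 : (0:ℝ) < t := by linarith
  set A : ℝ := ∏ p ∈ S, ((p:ℝ) - 1) with hAdef
  set B : ℝ := ∏ p ∈ S, (p:ℝ) with hBdef
  set Q : ℝ := ∏ p ∈ S, Real.sqrt (Real.sqrt (p:ℝ)) with hQdef
  have hp2 : ∀ p ∈ S, (2:ℝ) ≤ (p:ℝ) := by
    intro p hp
    exact_mod_cast (hprime p hp).two_le
  have hApos : 0 < A := Finset.prod_pos (fun p hp => by have := hp2 p hp; linarith)
  have hBpos : 0 < B := Finset.prod_pos (fun p hp => by have := hp2 p hp; linarith)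
  -- totient formula
  have htot : (N.totient : ℝ) * B = (N:ℝ) * A := by
    have hc : ((N.totient * ∏ p ∈ S, p : ℕ) : ℝ) = ((N * ∏ p ∈ S, (p - 1) : ℕ) : ℝ) := by
      exact_mod_cast congrArg (Nat.cast : ℕ → ℝ) (Nat.totient_mul_prod_primeFactors N)
    push_cast at hc
    have hps : ∏ p ∈ S, (((p - 1 : ℕ)) : ℝ) = A := by
      rw [hAdef]
      refine Finset.prod_congr rfl (fun p hp => ?_)
      have h2 := (hprime p hp).two_le
      have : ((p - 1 : ℕ) : ℝ) = (p:ℝ) - 1 := by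
        rw [Nat.cast_sub (by omega)]
        norm_num
      exact this
    rw [hps] at hc
    exact hc
  -- Q ≤ t
  have hQ4 : Q^4 = B := by
    rw [hQdef, hBdef, ← Finset.prod_pow]
    exact Finset.prod_congr rfl (fun p hp => quad_pow (by positivity))
  have hBleN : B ≤ (N:ℝ) := by
    have hc : ((∏ p ∈ S, p : ℕ) : ℝ) ≤ (N:ℝ) := by exact_mod_cast hrad
    rw [hBdef]
    push_cast at hc
    exact hc
  have hQt : Q ≤ t := by
    apply le_of_pow_le_pow_left₀ (by norm_num : (4:ℕ) ≠ 0) (le_of_lt ht0)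
    rw [hQ4, ht4]
    exact hBleN
  -- the product bound
  have hrleg : ∏ p ∈ S, rr p ≤ ∏ p ∈ S, (((p:ℝ)-1) * Real.sqrt (Real.sqrt p) / (2*p)) :=
    Finset.prod_le_prod (fun p _ => (rr_pos p).le) (fun p hp => rr_le_g (hprime p hp))
  have hgeq : ∏ p ∈ S, (((p:ℝ)-1) * Real.sqrt (Real.sqrt p) / (2*p)) =
      A * Q / (2^S.card * B) := by
    rw [hAdef, hQdef, hBdef, Finset.prod_div_distrib, Finset.prod_mul_distrib,
      Finset.prod_mul_distrib, Finset.prod_const]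
  have hC : (37/1000:ℝ) ≤ A * Q / (2^S.card * B) :=
    le_trans (le_trans (prod_rr_ge S) hrleg) (le_of_eq hgeq)
  have hkBpos : (0:ℝ) < 2^S.card * B := by positivity
  have hAQ : 37/1000 * (2^S.card * B) ≤ A * Q := (le_div_iff₀ hkBpos).mp hC
  have hAt : 37/1000 * (2^S.card * B) ≤ A * t :=
    le_trans hAQ (mul_le_mul_of_nonneg_left hQt hApos.le)
  -- numeric log bound
  have hlogN : Real.log N = 4 * Real.log t := by
    rw [← ht4, Real.log_pow]
    norm_num
  have hl1 : Real.log t - Real.log 1990 ≤ t / 1990 - 1 := by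
    have hd := Real.log_le_sub_one_of_pos (show (0:ℝ) < t / 1990 by positivity)
    rwa [Real.log_div (ne_of_gt ht0) (by norm_num)] at hd
  have hl2 : Real.log 1990 ≤ 11 * Real.log 2 := by
    have h1 : Real.log 1990 ≤ Real.log 2048 := Real.log_le_log (by norm_num) (by norm_num)
    rw [show (2048:ℝ) = 2 ^ 11 by norm_num, Real.log_pow] at h1
    simpa using h1
  have hlog2 := Real.log_two_lt_d9
  have hnum : 2 * (Real.log N + 1) < 37/1000 * t := by
    rw [hlogN]
    nlinarith [htge, hl1, hl2, hlog2]
  -- assemble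
  have hsqrtN : Real.sqrt N = t^2 := by
    rw [htdef]
    exact (Real.sq_sqrt (Real.sqrt_nonneg _)).symm
  rw [hsqrtN]
  have ht2pos : (0:ℝ) < t^2 * (2^S.card * B) := mul_pos (pow_pos ht0 2) hkBpos
  have hchain : 2 * t^2 * (Real.log N + 1) * 2^S.card * B < (N.totient:ℝ) * B := by
    have e1 : (N.totient:ℝ) * B = t^4 * A := by rw [htot, ← ht4]
    rw [e1]
    calc 2 * t^2 * (Real.log N + 1) * 2^S.card * B
        = t^2 * (2^S.card * B) * (2 * (Real.log N + 1)) := by ring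
      _ < t^2 * (2^S.card * B) * (37/1000 * t) := by
          exact mul_lt_mul_of_pos_left hnum ht2pos
      _ = t^3 * (37/1000 * (2^S.card * B)) := by ring
      _ ≤ t^3 * (A * t) := mul_le_mul_of_nonneg_left hAt (pow_nonneg ht0.le 3)
      _ = t^4 * A := by ring
  have hfin := lt_of_mul_lt_mul_right hchain hBpos.le
  linarith [hfin]
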